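/- arXiv:1405.6537 — 3 statements merged into one kernel-verified Lean document; each statement's English description precedes it below -/
import Mathlib

section
/- If ψ_k ~ k^{-(1+α)/2} with 0 < α < 1, then the covariance r(n) = ∑_{k=0}^∞ ψ_k ψ_{k+n} satisfies r(n) ~ b_α n^{-α} as n → ∞, where b_α = ∫₀^∞ x^{-(1+α)/2}(1+x)^{-(1+α)/2} dx. -/
open Filter MeasureTheory Set

set_option maxHeartbeats 1000000

section

namespace CovAux

noncomputable def g (β n x : ℝ) : ℝ := x ^ (-β) * (x + n) ^ (-β)

lemma g_nonneg (β : ℝ) {n x : ℝ} (hn : 0 ≤ n) (hx : 0 ≤ x) : 0 ≤ g β n x :=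
  mul_nonneg (Real.rpow_nonneg hx _) (Real.rpow_nonneg (by linarith) _)

lemma g_antitone {β : ℝ} (hβ : 0 < β) {n : ℝ} (hn : 0 ≤ n) :
    AntitoneOn (g β n) (Ioi 0) := by
  intro x hx y hy hxy
  have hx0 : (0:ℝ) < x := hx
  exact mul_le_mul (Real.rpow_le_rpow_of_nonpos hx0 hxy (by linarith))
    (Real.rpow_le_rpow_of_nonpos (by linarith) (by linarith) (by linarith))
    (Real.rpow_nonneg (by simp at hy; linarith) _) (Real.rpow_nonneg hx0.le _)

lemma g_continuousOn (β : ℝ) {n : ℝ} (hn : 0 ≤ n) : ContinuousOn (g β n) (Ioi 0) := by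
  intro x hx
  have hx0 : (0:ℝ) < x := hx
  apply ContinuousWithinAt.mul
  · exact continuousWithinAt_id.rpow_const (Or.inl hx0.ne')
  · exact (continuousWithinAt_id.add continuousWithinAt_const).rpow_const
      (Or.inl (by intro h; simp at h; nlinarith))

lemma g_integrableOn {β : ℝ} (hβ0 : 1/2 < β) (hβ1 : β < 1) {n : ℝ} (hn : 1 ≤ n) :
    IntegrableOn (g β n) (Ioi 0) := by
  have hn0 : (0:ℝ) ≤ n := by linarith
  have hmeas : ∀ s ⊆ Ioi (0:ℝ), MeasurableSet s → AEStronglyMeasurable (g β n) (volume.restrict s) :=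
    fun s hs hms => (((g_continuousOn β hn0).mono hs).aestronglyMeasurable hms)
  have h1 : IntegrableOn (g β n) (Ioc 0 1) := by
    have hint : IntegrableOn (fun x : ℝ => x ^ (-β)) (Ioc 0 1) := by
      rw [integrableOn_Ioc_iff_integrableOn_Ioo]
      exact (intervalIntegral.integrableOn_Ioo_rpow_iff one_pos).2 (by linarith)
    refine hint.mono' (hmeas _ Ioc_subset_Ioi_self measurableSet_Ioc) ?_
    filter_upwards [ae_restrict_mem measurableSet_Ioc] with x hx
    rw [Real.norm_of_nonneg (g_nonneg _ hn0 hx.1.le)]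
    calc g β n x ≤ x ^ (-β) * 1 := by
          refine mul_le_mul_of_nonneg_left ?_ (Real.rpow_nonneg hx.1.le _)
          exact Real.rpow_le_one_of_one_le_of_nonpos (by linarith [hx.1]) (by linarith)
      _ = x ^ (-β) := mul_one _
  have h2 : IntegrableOn (g β n) (Ioi 1) := by
    have hint : IntegrableOn (fun x : ℝ => x ^ (-(2*β))) (Ioi 1) :=
      integrableOn_Ioi_rpow_of_lt (by linarith) one_pos
    refine hint.mono' (hmeas _ (fun x hx => show (0:ℝ) < x from lt_trans one_pos hx) measurableSet_Ioi) ?_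
    filter_upwards [ae_restrict_mem measurableSet_Ioi] with x hx
    have hx0 : (0:ℝ) < x := lt_trans one_pos hx
    rw [Real.norm_of_nonneg (g_nonneg _ hn0 hx0.le)]
    calc g β n x ≤ x ^ (-β) * x ^ (-β) := by
          refine mul_le_mul_of_nonneg_left ?_ (Real.rpow_nonneg hx0.le _)
          exact Real.rpow_le_rpow_of_nonpos hx0 (by linarith) (by linarith)
      _ = x ^ (-(2*β)) := by rw [← Real.rpow_add hx0]; ring_nf
  have : Ioi (0:ℝ) = Ioc 0 1 ∪ Ioi 1 := (Ioc_union_Ioi_eq_Ioi one_pos.le).symm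
  rw [this]
  exact h1.union h2


section Comparison

lemma g_scale {β : ℝ} {c : ℝ} (hc0 : 0 < c) :
    ∫ x in Ioi (0:ℝ), g β c x = c ^ (1 - 2*β) * ∫ x in Ioi (0:ℝ), g β 1 x := by
  have key := MeasureTheory.integral_comp_mul_left_Ioi (g β 1) 0 (inv_pos.2 hc0)
  have hcb : (c⁻¹ : ℝ) ^ (-β) = c ^ β := by
    rw [Real.inv_rpow hc0.le, ← Real.rpow_neg hc0.le, neg_neg]
  have congr_eq : EqOn (fun x => g β 1 (c⁻¹ * x)) (fun x => c ^ (2*β) * g β c x) (Ioi 0) := by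
    intro x hx
    have hx0 : (0:ℝ) < x := hx
    simp only [g]
    have h1 : c⁻¹ * x + 1 = c⁻¹ * (x + c) := by field_simp
    rw [h1, Real.mul_rpow (by positivity) hx0.le, Real.mul_rpow (by positivity) (by positivity),
      hcb]
    rw [show (2:ℝ)*β = β + β by ring, Real.rpow_add hc0]
    ring
  rw [setIntegral_congr_fun measurableSet_Ioi congr_eq] at key
  rw [MeasureTheory.integral_const_mul, mul_zero, inv_inv, smul_eq_mul] at key
  have hc2 : (0:ℝ) < c ^ (2*β) := Real.rpow_pos_of_pos hc0 _
  have : c ^ (1 - 2*β) = c * (c ^ (2*β))⁻¹ := by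
    rw [← Real.rpow_neg hc0.le, show (1:ℝ) - 2*β = 1 + -(2*β) by ring, Real.rpow_add hc0,
      Real.rpow_one]
  rw [this]
  field_simp at key ⊢
  linarith [key]

lemma base_pos {β : ℝ} (hβ0 : 1/2 < β) (hβ1 : β < 1) :
    0 < ∫ x in Ioi (0:ℝ), g β 1 x := by
  rw [setIntegral_pos_iff_support_of_nonneg_ae ?hnn (g_integrableOn hβ0 hβ1 le_rfl)]
  case hnn =>
    filter_upwards [ae_restrict_mem measurableSet_Ioi] with x hx
    exact g_nonneg β zero_le_one (le_of_lt hx)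
  have hsub : Ioi (0:ℝ) ⊆ Function.support (g β 1) ∩ Ioi 0 := by
    intro x hx
    have hx0 : (0:ℝ) < x := hx
    refine ⟨?_, hx⟩
    simp only [Function.mem_support, g]
    positivity
  calc (0:ENNReal) < volume (Ioi (0:ℝ)) := by simp
    _ ≤ _ := measure_mono hsub


variable {β n : ℝ} (hβ0 : 1/2 < β) (hβ1 : β < 1) (hn : 1 ≤ n)
include hβ0 hβ1 hn

lemma hn0 : (0:ℝ) ≤ n := by linarith

-- integral over Ioc a b within Ioi 0 bounded by the constant value at the right end
lemma g_le_integral_Ioc {a b : ℝ} (ha : 0 ≤ a) (hab : a < b) :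
    (b - a) * g β n b ≤ ∫ x in Ioc a b, g β n x := by
  have hsub : Ioc a b ⊆ Ioi (0:ℝ) := fun x hx => lt_of_le_of_lt ha hx.1
  have hint : IntegrableOn (g β n) (Ioc a b) :=
    (g_integrableOn hβ0 hβ1 hn).mono_set hsub
  have hb : b ∈ Ioi (0:ℝ) := lt_of_le_of_lt ha hab
  have := setIntegral_mono_on (f := fun _ => g β n b) (g := g β n)
    (integrableOn_const (by simp [Real.volume_Ioc])) hint measurableSet_Ioc
    (fun x hx => g_antitone (by linarith) (by linarith) (hsub hx) hb hx.2)
  rw [setIntegral_const, measureReal_def, Real.volume_Ioc, ENNReal.toReal_ofReal (by linarith), smul_eq_mul] at this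
  exact this

lemma integral_Ioc_le_g {a b : ℝ} (ha : 0 < a) (hab : a < b) :
    ∫ x in Ioc a b, g β n x ≤ (b - a) * g β n a := by
  have hsub : Ioc a b ⊆ Ioi (0:ℝ) := fun x hx => lt_trans ha hx.1
  have hint : IntegrableOn (g β n) (Ioc a b) :=
    (g_integrableOn hβ0 hβ1 hn).mono_set hsub
  have := setIntegral_mono_on (f := g β n) (g := fun _ => g β n a)
    hint (integrableOn_const (by simp [Real.volume_Ioc])) measurableSet_Ioc
    (fun x hx => g_antitone (by linarith) (by linarith) ha (hsub hx) hx.1.le)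
  rw [setIntegral_const, measureReal_def, Real.volume_Ioc, ENNReal.toReal_ofReal (by linarith), smul_eq_mul] at this
  exact this

lemma g_intervalIntegrable {a b : ℝ} (ha : 0 ≤ a) (hab : a ≤ b) :
    IntervalIntegrable (g β n) volume a b := by
  rw [intervalIntegrable_iff_integrableOn_Ioc_of_le hab]
  exact (g_integrableOn hβ0 hβ1 hn).mono_set (fun x hx => lt_of_le_of_lt ha hx.1)

lemma sum_range_le_integral (N : ℕ) :
    ∑ i ∈ Finset.range N, g β n ((i:ℝ)+1) ≤ ∫ x in Ioi (0:ℝ), g β n x := by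
  have step : ∀ i ∈ Finset.range N,
      g β n ((i:ℝ)+1) ≤ ∫ x in ((i:ℝ))..((i:ℝ)+1), g β n x := by
    intro i _
    rw [intervalIntegral.integral_of_le (by linarith [Nat.cast_nonneg (α := ℝ) i])]
    have := g_le_integral_Ioc hβ0 hβ1 hn (Nat.cast_nonneg (α := ℝ) i)
      (by linarith [Nat.cast_nonneg (α := ℝ) i] : ((i:ℝ)) < (i:ℝ)+1)
    simpa using this
  calc ∑ i ∈ Finset.range N, g β n ((i:ℝ)+1)
      ≤ ∑ i ∈ Finset.range N, ∫ x in ((i:ℝ))..((i:ℝ)+1), g β n x := Finset.sum_le_sum step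
    _ = ∫ x in (0:ℝ)..(N:ℝ), g β n x := by
        have := intervalIntegral.sum_integral_adjacent_intervals
          (a := fun k : ℕ => (k:ℝ)) (n := N) (f := g β n) (μ := volume)
          (fun k _ => g_intervalIntegrable hβ0 hβ1 hn (Nat.cast_nonneg _) (by push_cast; linarith))
        simpa using this
    _ ≤ ∫ x in Ioi (0:ℝ), g β n x := by
        rw [intervalIntegral.integral_of_le (Nat.cast_nonneg _)]
        refine setIntegral_mono_set (g_integrableOn hβ0 hβ1 hn) ?_ ?_
        · filter_upwards [ae_restrict_mem measurableSet_Ioi] with x hx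
          exact g_nonneg β (by linarith) (le_of_lt hx)
        · exact HasSubset.Subset.eventuallyLE (fun x hx => hx.1)

lemma summable_g : Summable (fun i : ℕ => g β n ((i:ℝ)+1)) :=
  summable_of_sum_range_le (fun i => g_nonneg β (by linarith) (by positivity))
    (sum_range_le_integral hβ0 hβ1 hn)

lemma tsum_le_integral :
    ∑' i : ℕ, g β n ((i:ℝ)+1) ≤ ∫ x in Ioi (0:ℝ), g β n x :=
  Real.tsum_le_of_sum_range_le (fun i => g_nonneg β (by linarith) (by positivity))
    (sum_range_le_integral hβ0 hβ1 hn)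

lemma integral_le_tsum :
    ∫ x in Ioi (1:ℝ), g β n x ≤ ∑' i : ℕ, g β n ((i:ℝ)+1) := by
  have key : ∀ N : ℕ, ∫ x in (1:ℝ)..((N:ℝ)+1), g β n x ≤ ∑' i : ℕ, g β n ((i:ℝ)+1) := by
    intro N
    have step : ∀ i ∈ Finset.range N,
        (∫ x in ((i:ℝ)+1)..((i:ℝ)+2), g β n x) ≤ g β n ((i:ℝ)+1) := by
      intro i _
      rw [intervalIntegral.integral_of_le (by linarith)]
      have := integral_Ioc_le_g hβ0 hβ1 hn
        (by positivity : (0:ℝ) < (i:ℝ)+1) (by linarith : ((i:ℝ)+1) < (i:ℝ)+2)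
      simp only [show ((i:ℝ)+2) - ((i:ℝ)+1) = 1 by ring, one_mul] at this
      exact this
    calc ∫ x in (1:ℝ)..((N:ℝ)+1), g β n x
        = ∑ i ∈ Finset.range N, ∫ x in ((i:ℝ)+1)..((i:ℝ)+2), g β n x := by
          have := intervalIntegral.sum_integral_adjacent_intervals
            (a := fun k : ℕ => (k:ℝ)+1) (n := N) (f := g β n) (μ := volume)
            (fun k _ => g_intervalIntegrable hβ0 hβ1 hn (by positivity) (by push_cast; linarith))
          simp only [Nat.cast_add, Nat.cast_one, Nat.cast_zero, zero_add] at this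
          rw [← this]
          exact Finset.sum_congr rfl (fun i _ => by norm_num [show ((i:ℝ)+1)+1 = (i:ℝ)+2 by ring])
      _ ≤ ∑ i ∈ Finset.range N, g β n ((i:ℝ)+1) := Finset.sum_le_sum step
      _ ≤ ∑' i : ℕ, g β n ((i:ℝ)+1) :=
          Summable.sum_le_tsum _ (fun i _ => g_nonneg β (by linarith) (by positivity))
            (summable_g hβ0 hβ1 hn)
  have htend : Tendsto (fun N : ℕ => ∫ x in (1:ℝ)..((N:ℝ)+1), g β n x) atTop
      (nhds (∫ x in Ioi (1:ℝ), g β n x)) := by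
    apply MeasureTheory.intervalIntegral_tendsto_integral_Ioi 1
      ((g_integrableOn hβ0 hβ1 hn).mono_set (fun x hx => show (0:ℝ) < x from lt_trans one_pos hx))
    exact tendsto_atTop_add_const_right _ _ tendsto_natCast_atTop_atTop
  exact le_of_tendsto htend (Eventually.of_forall key)


-- bound for the integral near zero
lemma integral_Ioc01_le :
    ∫ x in Ioc (0:ℝ) 1, g β n x ≤ n ^ (-β) * (1-β)⁻¹ := by
  have hβ0' : (0:ℝ) < β := by linarith
  have hint : IntegrableOn (g β n) (Ioc 0 1) :=
    (g_integrableOn hβ0 hβ1 hn).mono_set (fun x hx => hx.1)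
  have hrint : IntegrableOn (fun x : ℝ => n ^ (-β) * x ^ (-β)) (Ioc 0 1) := by
    have : IntegrableOn (fun x : ℝ => x ^ (-β)) (Ioc 0 1) := by
      rw [integrableOn_Ioc_iff_integrableOn_Ioo]
      exact (intervalIntegral.integrableOn_Ioo_rpow_iff one_pos).2 (by linarith)
    exact this.const_mul _
  have hmono := setIntegral_mono_on hint hrint measurableSet_Ioc (fun x hx => ?_)
  · refine le_trans hmono ?_
    rw [MeasureTheory.integral_const_mul]
    have : ∫ x in Ioc (0:ℝ) 1, x ^ (-β) = (1-β)⁻¹ := by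
      rw [← intervalIntegral.integral_of_le zero_le_one,
        integral_rpow (Or.inl (by linarith : (-1:ℝ) < -β))]
      rw [Real.one_rpow, Real.zero_rpow (by intro h; rw [show -β + 1 = 1 - β by ring] at h; nlinarith)]
      field_simp
      ring_nf
    rw [this]
  · unfold g
    rw [mul_comm]
    apply mul_le_mul_of_nonneg_right _ (Real.rpow_nonneg hx.1.le _)
    exact Real.rpow_le_rpow_of_nonpos (by linarith) (by linarith [hx.1]) (by linarith)

lemma integral_Ioi1_ge :
    (∫ x in Ioi (0:ℝ), g β n x) - n ^ (-β) * (1-β)⁻¹ ≤ ∫ x in Ioi (1:ℝ), g β n x := by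
  have hsplit : ∫ x in Ioi (0:ℝ), g β n x
      = (∫ x in Ioc (0:ℝ) 1, g β n x) + ∫ x in Ioi (1:ℝ), g β n x := by
    rw [← MeasureTheory.setIntegral_union (Ioc_disjoint_Ioi le_rfl) measurableSet_Ioi
      ((g_integrableOn hβ0 hβ1 hn).mono_set (fun x hx => hx.1))
      ((g_integrableOn hβ0 hβ1 hn).mono_set (fun x hx => show (0:ℝ) < x from lt_trans one_pos hx))]
    rw [Ioc_union_Ioi_eq_Ioi zero_le_one]
  linarith [integral_Ioc01_le hβ0 hβ1 hn]


end Comparison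

section Discrete

variable {β : ℝ} (hβ0 : 1/2 < β) (hβ1 : β < 1) {n : ℕ} (hn : 1 ≤ n)
include hβ0 hβ1 hn

lemma hn1 : (1:ℝ) ≤ (n:ℝ) := by exact_mod_cast hn

lemma A_zero : g β (n:ℝ) ((0:ℕ):ℝ) = 0 := by
  have : ((0:ℕ):ℝ) = (0:ℝ) := by norm_num
  rw [this]
  unfold g
  rw [Real.zero_rpow (by intro h; simp at h; linarith), zero_mul]

lemma A_le (i : ℕ) : g β (n:ℝ) (i:ℝ) ≤ (n:ℝ) ^ (-β) := by
  have hnR : (1:ℝ) ≤ (n:ℝ) := hn1 hβ0 hβ1 hn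
  rcases Nat.eq_zero_or_pos i with rfl | hi
  · rw [A_zero hβ0 hβ1 hn]
    exact Real.rpow_nonneg (by linarith) _
  · have hi1 : (1:ℝ) ≤ (i:ℝ) := by exact_mod_cast hi
    unfold g
    calc (i:ℝ) ^ (-β) * ((i:ℝ) + n) ^ (-β) ≤ 1 * (n:ℝ) ^ (-β) :=
        mul_le_mul (Real.rpow_le_one_of_one_le_of_nonpos hi1 (by linarith))
          (Real.rpow_le_rpow_of_nonpos (by linarith) (by linarith) (by linarith))
          (Real.rpow_nonneg (by linarith) _) zero_le_one
      _ = (n:ℝ) ^ (-β) := one_mul _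

lemma hA1 : ∀ j : ℕ, g β (n:ℝ) ((j+1:ℕ):ℝ) = g β (n:ℝ) ((j:ℝ)+1) := by
  intro j; push_cast; ring_nf

lemma summable_A : Summable (fun i : ℕ => g β (n:ℝ) (i:ℝ)) := by
  rw [← summable_nat_add_iff 1]
  exact (summable_g hβ0 hβ1 (hn1 hβ0 hβ1 hn)).congr (fun j => (hA1 hβ0 hβ1 hn j).symm)

lemma tsum_A_eq : ∑' i : ℕ, g β (n:ℝ) (i:ℝ) = ∑' i : ℕ, g β (n:ℝ) ((i:ℝ)+1) := by
  rw [← Summable.sum_add_tsum_nat_add 1 (summable_A hβ0 hβ1 hn)]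
  simp only [Finset.range_one, Finset.sum_singleton]
  rw [A_zero hβ0 hβ1 hn, zero_add]
  exact tsum_congr (hA1 hβ0 hβ1 hn)

lemma summable_A_tail (K : ℕ) : Summable (fun j : ℕ => g β (n:ℝ) ((j+K:ℕ):ℝ)) :=
  ((summable_nat_add_iff K).2 (summable_A hβ0 hβ1 hn)).congr (fun j => rfl)

lemma tsum_tail_ub (K : ℕ) :
    ∑' j : ℕ, g β (n:ℝ) ((j+K:ℕ):ℝ) ≤ ∫ x in Ioi (0:ℝ), g β (n:ℝ) x := by
  have hsplit := Summable.sum_add_tsum_nat_add K (summable_A hβ0 hβ1 hn)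
  have hhead : 0 ≤ ∑ i ∈ Finset.range K, g β (n:ℝ) (i:ℝ) :=
    Finset.sum_nonneg (fun i _ => g_nonneg β (by positivity) (by positivity))
  have := tsum_le_integral hβ0 hβ1 (hn1 hβ0 hβ1 hn)
  rw [← tsum_A_eq hβ0 hβ1 hn] at this
  have : ∑' j : ℕ, g β (n:ℝ) ((j+K:ℕ):ℝ) ≤ ∑' i : ℕ, g β (n:ℝ) (i:ℝ) := by
    push_cast at hsplit ⊢
    linarith [hsplit]
  linarith [tsum_le_integral hβ0 hβ1 (hn1 hβ0 hβ1 hn), (tsum_A_eq hβ0 hβ1 hn)]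

lemma tsum_tail_lb (K : ℕ) :
    (∫ x in Ioi (1:ℝ), g β (n:ℝ) x) - K * (n:ℝ) ^ (-β) ≤
      ∑' j : ℕ, g β (n:ℝ) ((j+K:ℕ):ℝ) := by
  have hsplit := Summable.sum_add_tsum_nat_add K (summable_A hβ0 hβ1 hn)
  have hhead : ∑ i ∈ Finset.range K, g β (n:ℝ) (i:ℝ) ≤ K * (n:ℝ) ^ (-β) := by
    calc ∑ i ∈ Finset.range K, g β (n:ℝ) (i:ℝ)
        ≤ ∑ _i ∈ Finset.range K, (n:ℝ) ^ (-β) :=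
          Finset.sum_le_sum (fun i _ => A_le hβ0 hβ1 hn i)
      _ = K * (n:ℝ) ^ (-β) := by rw [Finset.sum_const, Finset.card_range, nsmul_eq_mul]
  have hti := integral_le_tsum hβ0 hβ1 (hn1 hβ0 hβ1 hn)
  rw [← tsum_A_eq hβ0 hβ1 hn] at hti
  push_cast at hsplit ⊢
  linarith [hsplit, hti, hhead]

end Discrete

end CovAux

end

open CovAux in
theorem covariance_asymptotic (α : ℝ) (hα0 : 0 < α) (hα1 : α < 1)
    (ψ : ℕ → ℝ) (hψ0 : ∀ k, 0 ≤ ψ k)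
    (hψ : Tendsto (fun k : ℕ => ψ k / (k : ℝ) ^ (-(1 + α) / 2)) atTop (nhds 1)) :
    Tendsto
      (fun n : ℕ =>
        (∑' k : ℕ, ψ k * ψ (k + n)) /
          ((∫ x in Ioi (0 : ℝ), x ^ (-(1 + α) / 2) * (1 + x) ^ (-(1 + α) / 2)) *
            (n : ℝ) ^ (-α)))
      atTop (nhds 1) := by
  set β : ℝ := (1 + α) / 2 with hβdef
  have hβ0 : 1/2 < β := by rw [hβdef]; linarith
  have hβ1 : β < 1 := by rw [hβdef]; linarith
  have hexp : -(1 + α) / 2 = -β := by rw [hβdef]; ring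
  have hαβ : α = 2*β - 1 := by rw [hβdef]; ring
  rw [hexp] at hψ
  simp only [hexp]
  set I : ℝ := ∫ x in Ioi (0:ℝ), g β 1 x with hIdef
  have hI : 0 < I := base_pos hβ0 hβ1
  have hIgoal : (∫ x in Ioi (0:ℝ), x ^ (-β) * (1+x) ^ (-β)) = I := by
    rw [hIdef]
    apply setIntegral_congr_fun measurableSet_Ioi
    intro x _
    simp only [g]
    rw [add_comm x 1]
  rw [hIgoal]
  -- ψ bound extraction
  have hψ' := Metric.tendsto_atTop.1 hψ
  have hbounds : ∀ δ : ℝ, 0 < δ → ∃ K : ℕ, 1 ≤ K ∧ ∀ k, K ≤ k →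
      (1-δ) * (k:ℝ) ^ (-β) ≤ ψ k ∧ ψ k ≤ (1+δ) * (k:ℝ) ^ (-β) := by
    intro δ hδ
    obtain ⟨K0, hK0⟩ := hψ' δ hδ
    refine ⟨max K0 1, le_max_right _ _, fun k hk => ?_⟩
    have hk1 : 1 ≤ k := le_trans (le_max_right _ _) hk
    have hkp : (0:ℝ) < (k:ℝ) := by exact_mod_cast hk1
    have hp : (0:ℝ) < (k:ℝ) ^ (-β) := Real.rpow_pos_of_pos hkp _
    have h := hK0 k (le_trans (le_max_left _ _) hk)
    rw [Real.dist_eq, abs_lt] at h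
    constructor
    · calc (1-δ) * (k:ℝ) ^ (-β) ≤ (ψ k / (k:ℝ) ^ (-β)) * (k:ℝ) ^ (-β) :=
          mul_le_mul_of_nonneg_right (by linarith [h.1]) hp.le
        _ = ψ k := div_mul_cancel₀ _ hp.ne'
    · calc ψ k = (ψ k / (k:ℝ) ^ (-β)) * (k:ℝ) ^ (-β) := (div_mul_cancel₀ _ hp.ne').symm
        _ ≤ (1+δ) * (k:ℝ) ^ (-β) := mul_le_mul_of_nonneg_right (by linarith [h.2]) hp.le
  -- Main convergence: n^α * r n → I
  have hmain : Tendsto (fun n : ℕ => (n:ℝ) ^ α * ∑' k : ℕ, ψ k * ψ (k + n))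
      atTop (nhds I) := by
    rw [Metric.tendsto_atTop]
    intro ε hε
    set δ : ℝ := min (ε / (6 * I)) 1 with hδdef
    have hδ0 : 0 < δ := lt_min (div_pos hε (by linarith)) one_pos
    have hδ1 : δ ≤ 1 := min_le_right _ _
    have hδε : 3 * δ * I ≤ ε / 2 := by
      have h1 : δ ≤ ε / (6 * I) := min_le_left _ _
      rw [le_div_iff₀ (by linarith)] at h1
      linarith
    obtain ⟨K, hK1, hKb⟩ := hbounds δ hδ0
    set Cψ : ℝ := ∑ k ∈ Finset.range K, ψ k with hCdef
    have hC0 : 0 ≤ Cψ := Finset.sum_nonneg (fun k _ => hψ0 k)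
    set D : ℝ := Cψ * (1+δ) + ((1-β)⁻¹ + K) with hDdef
    have h1β : (0:ℝ) ≤ (1-β)⁻¹ := le_of_lt (inv_pos.2 (by linarith))
    have hD0 : 0 ≤ D := by
      rw [hDdef]
      exact add_nonneg (mul_nonneg hC0 (by linarith)) (add_nonneg h1β (Nat.cast_nonneg K))
    -- error term tends to 0
    have he : Tendsto (fun n : ℕ => D * (n:ℝ) ^ (α - β)) atTop (nhds 0) := by
      have h1 : Tendsto (fun x : ℝ => x ^ (-(β - α))) atTop (nhds 0) :=
        tendsto_rpow_neg_atTop (by linarith)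
      have h2 : Tendsto (fun n : ℕ => ((n:ℝ)) ^ (α - β)) atTop (nhds 0) := by
        have := h1.comp tendsto_natCast_atTop_atTop (α := ℕ)
        simpa [neg_sub, Function.comp_def] using this
      simpa using h2.const_mul D
    obtain ⟨N1, hN1⟩ := (Metric.tendsto_atTop.1 he) (ε/2) (half_pos hε)
    refine ⟨max N1 K, fun n hn => ?_⟩
    have hnN1 : N1 ≤ n := le_trans (le_max_left _ _) hn
    have hnK : K ≤ n := le_trans (le_max_right _ _) hn
    have hn1 : 1 ≤ n := le_trans hK1 hnK
    have hnR : (1:ℝ) ≤ (n:ℝ) := by exact_mod_cast hn1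
    have hnpos : (0:ℝ) < (n:ℝ) := by linarith
    have hwpos : (0:ℝ) < (n:ℝ) ^ (-β) := Real.rpow_pos_of_pos hnpos _
    have hvpos : (0:ℝ) < (n:ℝ) ^ α := Real.rpow_pos_of_pos hnpos _
    -- abbreviations
    set w : ℝ := (n:ℝ) ^ (-β) with hwdef
    set v : ℝ := (n:ℝ) ^ α with hvdef
    set e : ℝ := (n:ℝ) ^ (α - β) with hedef
    have he0 : 0 ≤ e := Real.rpow_nonneg hnpos.le _
    have hvw : v * w = e := by
      rw [hvdef, hwdef, hedef, ← Real.rpow_add hnpos]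
      ring_nf
    have hvu : v * (n:ℝ) ^ (1 - 2*β) = 1 := by
      rw [hvdef, ← Real.rpow_add hnpos, hαβ]
      norm_num
    have hDe : D * e < ε / 2 := by
      have := hN1 n hnN1
      rw [Real.dist_eq] at this
      have h0 : 0 ≤ D * e := mul_nonneg hD0 he0
      rw [abs_of_nonneg (by simpa using h0)] at this
      simpa using this
    -- per-term bounds on the tail
    have hterm_ub : ∀ j : ℕ, ψ (j+K) * ψ (j+K+n) ≤ (1+δ)^2 * g β (n:ℝ) ((j+K:ℕ):ℝ) := by
      intro j
      have h1 := (hKb (j+K) (Nat.le_add_left _ _)).2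
      have h2 := (hKb (j+K+n) (le_trans (Nat.le_add_left _ _) (Nat.le_add_right _ _))).2
      have hcast : ((j+K+n:ℕ):ℝ) = ((j+K:ℕ):ℝ) + (n:ℝ) := by push_cast; ring
      rw [hcast] at h2
      calc ψ (j+K) * ψ (j+K+n)
          ≤ ((1+δ) * ((j+K:ℕ):ℝ) ^ (-β)) * ((1+δ) * (((j+K:ℕ):ℝ) + n) ^ (-β)) :=
            mul_le_mul h1 h2 (hψ0 _) (by positivity)
        _ = (1+δ)^2 * g β (n:ℝ) ((j+K:ℕ):ℝ) := by simp only [g]; ring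
    have hterm_lb : ∀ j : ℕ, (1-δ)^2 * g β (n:ℝ) ((j+K:ℕ):ℝ) ≤ ψ (j+K) * ψ (j+K+n) := by
      intro j
      have h1 := (hKb (j+K) (Nat.le_add_left _ _)).1
      have h2 := (hKb (j+K+n) (le_trans (Nat.le_add_left _ _) (Nat.le_add_right _ _))).1
      have hcast : ((j+K+n:ℕ):ℝ) = ((j+K:ℕ):ℝ) + (n:ℝ) := by push_cast; ring
      rw [hcast] at h2
      have hδ1' : (0:ℝ) ≤ 1 - δ := by linarith
      calc (1-δ)^2 * g β (n:ℝ) ((j+K:ℕ):ℝ)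
          = ((1-δ) * ((j+K:ℕ):ℝ) ^ (-β)) * ((1-δ) * (((j+K:ℕ):ℝ) + n) ^ (-β)) := by
            simp only [g]; ring
        _ ≤ ψ (j+K) * ψ (j+K+n) :=
            mul_le_mul h1 h2 (by positivity) (hψ0 _)
    -- summability
    have hsumg := summable_A_tail hβ0 hβ1 hn1 K
    have hsum_tail : Summable (fun j : ℕ => ψ (j+K) * ψ (j+K+n)) := by
      apply Summable.of_nonneg_of_le (fun j => mul_nonneg (hψ0 _) (hψ0 _)) hterm_ub
      exact hsumg.mul_left _
    have hsummable : Summable (fun k : ℕ => ψ k * ψ (k + n)) := by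
      rw [← summable_nat_add_iff K]
      exact hsum_tail
    -- split sum
    have hsplit := Summable.sum_add_tsum_nat_add K hsummable
    set r : ℝ := ∑' k : ℕ, ψ k * ψ (k + n) with hrdef
    set tail : ℝ := ∑' j : ℕ, ψ (j+K) * ψ (j+K+n) with htldef
    have hsplit' : r = (∑ k ∈ Finset.range K, ψ k * ψ (k+n)) + tail := hsplit.symm
    -- head bounds
    have hhead0 : 0 ≤ ∑ k ∈ Finset.range K, ψ k * ψ (k+n) :=
      Finset.sum_nonneg (fun k _ => mul_nonneg (hψ0 _) (hψ0 _))
    have hheadub : (∑ k ∈ Finset.range K, ψ k * ψ (k+n)) ≤ Cψ * ((1+δ) * w) := by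
      rw [hCdef, Finset.sum_mul]
      apply Finset.sum_le_sum
      intro k _
      have h2 := (hKb (k+n) (le_trans hnK (Nat.le_add_left _ _))).2
      have hkn : (n:ℝ) ≤ ((k+n:ℕ):ℝ) := by push_cast; linarith [Nat.cast_nonneg (α := ℝ) k]
      have h3 : ((k+n:ℕ):ℝ) ^ (-β) ≤ w := by
        rw [hwdef]
        exact Real.rpow_le_rpow_of_nonpos hnpos hkn (by linarith)
      calc ψ k * ψ (k+n) ≤ ψ k * ((1+δ) * ((k+n:ℕ):ℝ) ^ (-β)) :=
            mul_le_mul_of_nonneg_left h2 (hψ0 _)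
        _ ≤ ψ k * ((1+δ) * w) := by
            apply mul_le_mul_of_nonneg_left _ (hψ0 _)
            exact mul_le_mul_of_nonneg_left h3 (by linarith)
    -- tail bounds via T
    set T : ℝ := ∑' j : ℕ, g β (n:ℝ) ((j+K:ℕ):ℝ) with hTdef
    have hT0 : 0 ≤ T := tsum_nonneg (fun j => g_nonneg β (by positivity) (by positivity))
    have htail_ub : tail ≤ (1+δ)^2 * T := by
      rw [htldef, hTdef, ← tsum_mul_left]
      exact Summable.tsum_le_tsum hterm_ub hsum_tail (hsumg.mul_left _)
    have htail_lb : (1-δ)^2 * T ≤ tail := by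
      rw [htldef, hTdef, ← tsum_mul_left]
      exact Summable.tsum_le_tsum hterm_lb (hsumg.mul_left _) hsum_tail
    -- T bounds
    have hTub : T ≤ (n:ℝ) ^ (1 - 2*β) * I := by
      rw [hTdef]
      calc ∑' j : ℕ, g β (n:ℝ) ((j+K:ℕ):ℝ) ≤ ∫ x in Ioi (0:ℝ), g β (n:ℝ) x :=
            tsum_tail_ub hβ0 hβ1 hn1 K
        _ = (n:ℝ) ^ (1 - 2*β) * I := g_scale hnpos
    have hTlb : (n:ℝ) ^ (1 - 2*β) * I - w * (1-β)⁻¹ - K * w ≤ T := by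
      have h1 := tsum_tail_lb hβ0 hβ1 hn1 K
      have h2 := integral_Ioi1_ge hβ0 hβ1 hnR
      rw [g_scale hnpos] at h2
      rw [hTdef]
      calc (n:ℝ) ^ (1 - 2*β) * I - w * (1-β)⁻¹ - K * w
          ≤ (∫ x in Ioi (1:ℝ), g β (n:ℝ) x) - K * w := by rw [hwdef]; linarith
        _ ≤ _ := by rw [hwdef]; linarith [h1]
    -- final numeric assembly
    clear_value δ I Cψ D w v e r tail T
    rw [Real.dist_eq, abs_sub_lt_iff]
    have hrub : v * r ≤ Cψ * (1+δ) * e + (1+δ)^2 * I := by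
      have h1 : r ≤ Cψ * ((1+δ) * w) + (1+δ)^2 * ((n:ℝ) ^ (1 - 2*β) * I) := by
        rw [hsplit']
        have := le_trans htail_ub (mul_le_mul_of_nonneg_left hTub (by positivity))
        linarith
      calc v * r ≤ v * (Cψ * ((1+δ) * w) + (1+δ)^2 * ((n:ℝ) ^ (1 - 2*β) * I)) :=
            mul_le_mul_of_nonneg_left h1 hvpos.le
        _ = Cψ * (1+δ) * (v * w) + (1+δ)^2 * I * (v * (n:ℝ) ^ (1 - 2*β)) := by ring
        _ = Cψ * (1+δ) * e + (1+δ)^2 * I := by rw [hvw, hvu]; ring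
    have hrlb : (1-δ)^2 * I - ((1-β)⁻¹ + K) * e ≤ v * r := by
      have h1 : (1-δ)^2 * ((n:ℝ) ^ (1 - 2*β) * I - w * (1-β)⁻¹ - K * w) ≤ r := by
        rw [hsplit']
        have h2 : (1-δ)^2 * ((n:ℝ) ^ (1 - 2*β) * I - w * (1-β)⁻¹ - K * w) ≤ (1-δ)^2 * T :=
          mul_le_mul_of_nonneg_left hTlb (by positivity)
        linarith
      have h3 := mul_le_mul_of_nonneg_left h1 hvpos.le
      have hrw : v * ((1-δ)^2 * ((n:ℝ) ^ (1 - 2*β) * I - w * (1-β)⁻¹ - K * w))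
          = (1-δ)^2 * I - (1-δ)^2 * (((1-β)⁻¹ + K) * e) := by
        linear_combination ((1-δ)^2 * I) * hvu - ((1-δ)^2 * ((1-β)⁻¹ + (K:ℝ))) * hvw
      rw [hrw] at h3
      have hd2 : (1-δ)^2 ≤ 1 := by
        apply pow_le_one₀ <;> linarith
      have hce0 : 0 ≤ ((1-β)⁻¹ + (K:ℝ)) * e :=
        mul_nonneg (add_nonneg h1β (Nat.cast_nonneg K)) he0
      have h4 : (1-δ)^2 * (((1-β)⁻¹ + (K:ℝ)) * e) ≤ ((1-β)⁻¹ + (K:ℝ)) * e :=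
        mul_le_of_le_one_left hce0 hd2
      linarith only [h3, h4]
    have hsq : δ * δ * I ≤ δ * I :=
      mul_le_mul_of_nonneg_right (mul_le_of_le_one_left hδ0.le hδ1) hI.le
    have hsq0 : 0 ≤ δ * δ * I := mul_nonneg (mul_nonneg hδ0.le hδ0.le) hI.le
    have hδI : 0 ≤ δ * I := mul_nonneg hδ0.le hI.le
    constructor
    · -- v * r - I < ε
      have hCe : Cψ * (1+δ) * e ≤ D * e := by
        apply mul_le_mul_of_nonneg_right _ he0
        rw [hDdef]
        exact le_add_of_nonneg_right (add_nonneg h1β (Nat.cast_nonneg K))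
      linarith only [hrub, hCe, hDe, hδε, hsq]
    · -- I - v * r < ε
      have hKe : ((1-β)⁻¹ + K) * e ≤ D * e := by
        apply mul_le_mul_of_nonneg_right _ he0
        rw [hDdef]
        exact le_add_of_nonneg_left (mul_nonneg hC0 (by linarith))
      linarith only [hrlb, hKe, hDe, hδε, hsq0, hδI]
  -- conclude: divide by I * n^(-α)
  have hfinal := hmain.div_const I
  rw [div_self hI.ne'] at hfinal
  apply hfinal.congr'
  filter_upwards [eventually_ge_atTop 1] with n hn1
  have hnpos : (0:ℝ) < (n:ℝ) := by exact_mod_cast hn1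
  have hvpos : (0:ℝ) < (n:ℝ) ^ α := Real.rpow_pos_of_pos hnpos _
  rw [Real.rpow_neg hnpos.le]
  field_simp
end

section
/- Let H = 1 − α/2 with 0 < α < 1, fix x ≠ 0 and c₁ > 0, and set u = u(T) = 1 − c₁ x T^{−α/2}. With σ₂ = u^H and r = (1 + u^{2H} − (1−u)^{2H})/(2u^H) (for T large so that 0 < u < 1 when x > 0, or u > 1 when x < 0, with |1−u| in place of (1−u)), one has σ₂√(1−r²) ~ |c₁ x|^{1−α/2} T^{−α/2 + α²/4} as T → ∞. -/
open Filter

private lemma sd_alg (s b : ℝ) (hs : 0 < s) (hb : 0 < b) :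
    s * Real.sqrt (1 - ((1 + s ^ 2 - b ^ 2) / (2 * s)) ^ 2) / b
      = Real.sqrt ((1 - (1 - s) ^ 2 / b ^ 2) * (((1 + s) ^ 2 - b ^ 2) / 4)) := by
  have h1 : (1 - (1 - s) ^ 2 / b ^ 2) * (((1 + s) ^ 2 - b ^ 2) / 4)
      = (s / b) ^ 2 * (1 - ((1 + s ^ 2 - b ^ 2) / (2 * s)) ^ 2) := by
    field_simp
    ring
  rw [h1, Real.sqrt_mul (sq_nonneg _), Real.sqrt_sq (div_nonneg hs.le hb.le)]
  ring

theorem conditional_sd_asymptotic (α : ℝ) (hα0 : 0 < α) (hα1 : α < 1)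
    (x : ℝ) (hx : x ≠ 0) (c₁ : ℝ) (hc₁ : 0 < c₁) :
    Tendsto
      (fun T : ℝ =>
        (let H := 1 - α / 2
         let u := 1 - c₁ * x * T ^ (-α / 2)
         let σ₂ := |u| ^ H
         let r := (1 + |u| ^ (2 * H) - |1 - u| ^ (2 * H)) / (2 * σ₂)
         σ₂ * Real.sqrt (1 - r ^ 2)) /
          (|c₁ * x| ^ (1 - α / 2) * T ^ (-α / 2 + α ^ 2 / 4)))
      atTop (nhds 1) := by
  have hcx : c₁ * x ≠ 0 := mul_ne_zero hc₁.ne' hx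
  set H : ℝ := 1 - α / 2 with hH
  have hH0 : 0 < H := by rw [hH]; linarith
  set G : ℝ → ℝ := fun ε =>
    |1 - ε| ^ H * Real.sqrt (1 -
      ((1 + |1 - ε| ^ (2 * H) - |ε| ^ (2 * H)) / (2 * |1 - ε| ^ H)) ^ 2) / |ε| ^ H
    with hG
  -- ε tends to 0 within {0}ᶜ
  have hεlim : Tendsto (fun T : ℝ => c₁ * x * T ^ (-α / 2)) atTop (nhdsWithin 0 {0}ᶜ) := by
    rw [tendsto_nhdsWithin_iff]
    constructor
    · have h0 : Tendsto (fun T : ℝ => T ^ (-(α / 2))) atTop (nhds 0) :=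
        tendsto_rpow_neg_atTop (by linarith)
      have := h0.const_mul (c₁ * x)
      simpa [neg_div] using this
    · filter_upwards [eventually_gt_atTop (0 : ℝ)] with T hT
      have : (0 : ℝ) < T ^ (-α / 2) := Real.rpow_pos_of_pos hT _
      simp only [Set.mem_compl_iff, Set.mem_singleton_iff]
      exact mul_ne_zero hcx this.ne'
  -- G tends to 1 at 0 within {0}ᶜ
  have hGlim : Tendsto G (nhdsWithin 0 {0}ᶜ) (nhds 1) := by
    set h : ℝ → ℝ := fun ε =>
      (1 - ((1 - (1 - ε) ^ H) / ε) ^ 2 * |ε| ^ α) *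
        (((1 + (1 - ε) ^ H) ^ 2 - |ε| ^ (2 * H)) / 4) with hh
    have heq : G =ᶠ[nhdsWithin 0 {0}ᶜ] fun ε => Real.sqrt (h ε) := by
      have hmem : {(0:ℝ)}ᶜ ∩ Set.Ioo (-1 : ℝ) 1 ∈ nhdsWithin (0 : ℝ) {0}ᶜ :=
        inter_mem_nhdsWithin _ (Ioo_mem_nhds (by norm_num) (by norm_num))
      filter_upwards [hmem] with ε hε
      obtain ⟨hε0, hε1, hε2⟩ := hε
      have hε0' : ε ≠ 0 := hε0
      have h1ε : (0 : ℝ) < 1 - ε := by linarith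
      have habs : |1 - ε| = 1 - ε := abs_of_pos h1ε
      have hεa : (0 : ℝ) < |ε| := abs_pos.2 hε0'
      set s : ℝ := (1 - ε) ^ H with hs'
      set b : ℝ := |ε| ^ H with hb'
      have hs : 0 < s := Real.rpow_pos_of_pos h1ε _
      have hb : 0 < b := Real.rpow_pos_of_pos hεa _
      have hs2 : (1 - ε) ^ (2 * H) = s ^ 2 := by
        rw [hs', two_mul, Real.rpow_add h1ε, sq]
      have hb2 : |ε| ^ (2 * H) = b ^ 2 := by
        rw [hb', two_mul, Real.rpow_add hεa, sq]
      have hGε : G ε = s * Real.sqrt (1 - ((1 + s ^ 2 - b ^ 2) / (2 * s)) ^ 2) / b := by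
        simp only [hG, habs]
        rw [hs2, hb2, ← hs', ← hb']
      rw [hGε, sd_alg s b hs hb]
      congr 1
      have hb2α : |ε| ^ α * b ^ 2 = ε ^ 2 := by
        rw [← hb2, ← Real.rpow_add hεa]
        have h2 : α + 2 * H = 2 := by rw [hH]; ring
        rw [h2, show ((2:ℝ)) = ((2:ℕ):ℝ) by norm_num, Real.rpow_natCast, sq_abs]
      have hq : ((1 - s) / ε) ^ 2 * |ε| ^ α = (1 - s) ^ 2 / b ^ 2 := by
        rw [div_pow, div_mul_eq_mul_div, div_eq_div_iff (by positivity) (by positivity),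
          mul_assoc, hb2α]
      rw [hh]
      simp only [← hs', hq, hb2]
    rw [tendsto_congr' heq]
    have hhlim : Tendsto h (nhdsWithin 0 {0}ᶜ) (nhds 1) := by
      have hda : HasDerivAt (fun ε : ℝ => (1 - ε) ^ H) (-H) 0 := by
        have h2 : HasDerivAt (fun ε : ℝ => 1 - ε) (-1) 0 := (hasDerivAt_id 0).const_sub 1
        have h3 := h2.rpow_const (p := H) (Or.inl (by norm_num))
        norm_num at h3
        simpa [Real.one_rpow] using h3
      have hslope := hasDerivAt_iff_tendsto_slope.1 hda
      have ht1 : Tendsto (fun ε : ℝ => (1 - (1 - ε) ^ H) / ε) (nhdsWithin 0 {0}ᶜ) (nhds H) := by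
        have h4 := hslope.neg
        rw [neg_neg] at h4
        refine h4.congr (fun ε => ?_)
        simp only [slope_def_field, sub_zero, Real.one_rpow]
        ring_nf
      have ht2 : Tendsto (fun ε : ℝ => |ε| ^ α) (nhdsWithin 0 {0}ᶜ) (nhds 0) := by
        have hc : ContinuousAt (fun ε : ℝ => |ε| ^ α) 0 :=
          (Real.continuousAt_rpow_const _ α (Or.inr hα0.le)).comp continuous_abs.continuousAt
        have := hc.tendsto
        rw [show |(0:ℝ)| ^ α = 0 by simp [Real.zero_rpow hα0.ne']] at this
        exact this.mono_left nhdsWithin_le_nhds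
      have ht4 : Tendsto (fun ε : ℝ => |ε| ^ (2 * H)) (nhdsWithin 0 {0}ᶜ) (nhds 0) := by
        have hc : ContinuousAt (fun ε : ℝ => |ε| ^ (2 * H)) 0 :=
          (Real.continuousAt_rpow_const _ (2 * H) (Or.inr (by linarith))).comp
            continuous_abs.continuousAt
        have := hc.tendsto
        rw [show |(0:ℝ)| ^ (2 * H) = 0 by simp [Real.zero_rpow (by linarith : 2 * H ≠ 0)]] at this
        exact this.mono_left nhdsWithin_le_nhds
      have ht3 : Tendsto (fun ε : ℝ => (1 - ε) ^ H) (nhdsWithin 0 {0}ᶜ) (nhds 1) := by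
        have hc : ContinuousAt (fun ε : ℝ => (1 - ε) ^ H) 0 :=
          (Real.continuousAt_rpow_const _ H (Or.inl (by norm_num))).comp
            ((continuous_const.sub continuous_id).continuousAt)
        have := hc.tendsto
        rw [show ((1:ℝ) - 0) ^ H = 1 by simp [Real.one_rpow]] at this
        exact this.mono_left nhdsWithin_le_nhds
      have hmain :
          Tendsto h (nhdsWithin 0 {0}ᶜ)
            (nhds ((1 - H ^ 2 * 0) * (((1 + 1) ^ 2 - 0) / 4))) := by
        exact (tendsto_const_nhds.sub ((ht1.pow 2).mul ht2)).mul
          (((((tendsto_const_nhds.add ht3).pow 2).sub ht4)).div_const 4)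
      norm_num at hmain
      exact hmain
    have hcont := (Real.continuous_sqrt.continuousAt (x := (1:ℝ))).tendsto.comp hhlim
    simpa [Real.sqrt_one, Function.comp_def] using hcont
  -- combine
  have hcomp : Tendsto (fun T : ℝ => G (c₁ * x * T ^ (-α / 2))) atTop (nhds 1) :=
    hGlim.comp hεlim
  refine hcomp.congr' ?_
  filter_upwards [eventually_gt_atTop (0 : ℝ)] with T hT
  have hTp : (0 : ℝ) < T ^ (-α / 2) := Real.rpow_pos_of_pos hT _
  have hden : |c₁ * x| ^ H * T ^ (-α / 2 + α ^ 2 / 4) = |c₁ * x * T ^ (-α / 2)| ^ H := by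
    rw [abs_mul (c₁ * x) (T ^ (-α / 2)), abs_of_pos hTp,
      Real.mul_rpow (abs_nonneg _) hTp.le, ← Real.rpow_mul hT.le]
    congr 1
    rw [hH]; ring
  simp only [hG, sub_sub_cancel]
  rw [← hden]
end

section
/- Let H ∈ (1/2,1), let g be as above, and define f(t) = (1/k_H)∫_{−∞}^0 ((t−s)^{H−1/2} − (−s)^{H−1/2}) g(s) ds + (1/k_H)∫_0^t (t−s)^{H−1/2} g(s) ds for 0 ≤ t ≤ 1. Then f is continuous and strictly increasing on [0,1] with f(0) = 0 and f(1) = 1. -/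
open MeasureTheory Set

lemma mvt_bound {p : ℝ} (hp0 : 0 < p) (hp1 : p < 1) {x : ℝ} (hx : 1 ≤ x) :
    (1 + x) ^ p - x ^ p ≤ p * x ^ (p - 1) := by
  have hx0 : (0:ℝ) < x := by linarith
  have hint : ∀ c : ℝ, 0 < c → IntervalIntegrable (fun u : ℝ => u ^ (p-1)) volume x (1+x) := by
    intro c hc
    apply ContinuousOn.intervalIntegrable
    apply ContinuousOn.rpow_const continuousOn_id
    intro u hu
    left
    simp only [id_eq]
    rcases mem_uIcc.1 hu with h | h <;> nlinarith [h.1]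
  have key : ∫ u in x..(1+x), u ^ (p-1) = ((1+x) ^ p - x ^ p) / p := by
    rw [integral_rpow (Or.inl (by linarith))]
    rw [sub_add_cancel]
  have mono : ∫ u in x..(1+x), u ^ (p-1) ≤ ∫ u in x..(1+x), x ^ (p-1) := by
    apply intervalIntegral.integral_mono_on (by linarith) (hint 1 one_pos)
      intervalIntegrable_const
    intro u hu
    exact Real.rpow_le_rpow_of_nonpos hx0 hu.1 (by linarith)
  rw [key] at mono
  rw [intervalIntegral.integral_const] at mono
  have : ((1+x)^p - x^p)/p ≤ x ^ (p-1) := by simpa using mono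
  calc (1+x)^p - x^p = p * (((1+x)^p - x^p)/p) := by field_simp
  _ ≤ p * x ^ (p-1) := by nlinarith

lemma G_integrable {p : ℝ} (hp0 : 0 < p) (hp2 : p < 1/2) :
    IntegrableOn (fun s : ℝ => ((1-s)^p - (-s)^p)^2) (Iic (0:ℝ)) := by
  have hcont : Continuous (fun x : ℝ => x ^ p) := Real.continuous_rpow_const hp0.le
  have hGcont : Continuous (fun s : ℝ => ((1-s)^p - (-s)^p)^2) :=
    ((hcont.comp (continuous_const.sub continuous_id)).sub (hcont.comp continuous_neg)).pow 2
  rw [← Set.Iic_union_Ioc_eq_Iic (show (-1:ℝ) ≤ 0 by norm_num), integrableOn_union]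
  constructor
  · -- Iic (-1)
    have h1 : IntegrableOn (fun x : ℝ => p^2 * x ^ (2*p-2)) (Ici (1:ℝ)) := by
      rw [integrableOn_Ici_iff_integrableOn_Ioi]
      exact (integrableOn_Ioi_rpow_of_lt (by linarith) one_pos).const_mul _
    have h2 : IntegrableOn (fun s : ℝ => p^2 * (-s) ^ (2*p-2)) (Iic (-1:ℝ)) := by
      have := (MeasurePreserving.integrableOn_comp_preimage
        (Measure.measurePreserving_neg (volume : Measure ℝ))
        (Homeomorph.neg ℝ).measurableEmbedding).2 h1
      simpa [Function.comp_def] using this.mono_set (by intro s hs; simp at hs ⊢; linarith [hs])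
    apply h2.mono' hGcont.aestronglyMeasurable.restrict
    filter_upwards [ae_restrict_mem measurableSet_Iic] with s hs
    simp only [mem_Iic] at hs
    have hx : (1:ℝ) ≤ -s := by linarith
    have hx0 : (0:ℝ) < -s := by linarith
    have hb := mvt_bound hp0 (by linarith) hx
    have hnn : 0 ≤ (1 + -s)^p - (-s)^p := by
      have := Real.rpow_le_rpow (by linarith : (0:ℝ) ≤ -s) (by linarith : -s ≤ 1 + -s) hp0.le
      linarith
    have h1s : (1 - s) = 1 + -s := by ring
    rw [Real.norm_eq_abs, abs_of_nonneg (sq_nonneg _), h1s]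
    have hsq : ((1 + -s)^p - (-s)^p)^2 ≤ (p * (-s)^(p-1))^2 := by
      apply pow_le_pow_left₀ hnn hb
    calc ((1 + -s)^p - (-s)^p)^2 ≤ (p * (-s)^(p-1))^2 := hsq
    _ = p^2 * (-s)^(2*p-2) := by
        have h2' : ((-s)^(p-1))^2 = (-s)^(2*p-2) := by
          rw [sq, ← Real.rpow_add hx0]; ring_nf
        rw [mul_pow, h2']
  · -- Ioc (-1) 0
    exact (hGcont.integrableOn_Icc (a := (-1:ℝ)) (b := 0)).mono_set Ioc_subset_Icc_self

lemma F_nonneg {p t s : ℝ} (hp0 : 0 < p) (ht0 : 0 ≤ t) (hs : s ≤ 0) :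
    0 ≤ (t-s)^p - (-s)^p := by
  have := Real.rpow_le_rpow (by linarith : (0:ℝ) ≤ -s) (by linarith : -s ≤ t - s) hp0.le
  linarith

lemma F_le {p t₁ t₂ s : ℝ} (hp0 : 0 < p) (h12 : t₁ ≤ t₂) (hs : s ≤ 0) (ht0 : 0 ≤ t₁) :
    (t₁-s)^p - (-s)^p ≤ (t₂-s)^p - (-s)^p := by
  have := Real.rpow_le_rpow (by linarith : (0:ℝ) ≤ t₁ - s) (by linarith : t₁ - s ≤ t₂ - s) hp0.le
  linarith

lemma F_integrable {p : ℝ} (hp0 : 0 < p) (hp2 : p < 1/2) {t : ℝ} (ht0 : 0 ≤ t) (ht1 : t ≤ 1) :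
    IntegrableOn (fun s : ℝ => ((t-s)^p - (-s)^p) * ((1-s)^p - (-s)^p)) (Iic (0:ℝ)) := by
  have hcont : Continuous (fun x : ℝ => x ^ p) := Real.continuous_rpow_const hp0.le
  have hFc : Continuous (fun s : ℝ => ((t-s)^p - (-s)^p) * ((1-s)^p - (-s)^p)) :=
    (((hcont.comp (continuous_const.sub continuous_id)).sub (hcont.comp continuous_neg)).mul
      ((hcont.comp (continuous_const.sub continuous_id)).sub (hcont.comp continuous_neg)))
  apply (G_integrable hp0 hp2).mono' hFc.aestronglyMeasurable.restrict
  filter_upwards [ae_restrict_mem measurableSet_Iic] with s hs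
  simp only [mem_Iic] at hs
  have h1 : 0 ≤ (t-s)^p - (-s)^p := F_nonneg hp0 ht0 hs
  have h2 : (t-s)^p - (-s)^p ≤ (1-s)^p - (-s)^p := F_le hp0 ht1 hs ht0
  have h3 : 0 ≤ (1-s)^p - (-s)^p := F_nonneg hp0 zero_le_one hs
  rw [Real.norm_eq_abs, abs_of_nonneg (mul_nonneg h1 h3), sq]
  exact mul_le_mul_of_nonneg_right h2 h3

lemma I_cont {p : ℝ} (hp0 : 0 < p) (hp2 : p < 1/2) :
    ContinuousOn (fun t : ℝ => ∫ s in Iic (0:ℝ), ((t-s)^p - (-s)^p) * ((1-s)^p - (-s)^p))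
      (Icc 0 1) := by
  have hcont : Continuous (fun x : ℝ => x ^ p) := Real.continuous_rpow_const hp0.le
  apply continuousOn_of_dominated (bound := fun s : ℝ => ((1-s)^p - (-s)^p)^2)
  · intro t ht
    exact ((((hcont.comp (continuous_const.sub continuous_id)).sub (hcont.comp continuous_neg)).mul
      ((hcont.comp (continuous_const.sub continuous_id)).sub
        (hcont.comp continuous_neg)))).aestronglyMeasurable.restrict
  · intro t ht
    filter_upwards [ae_restrict_mem measurableSet_Iic] with s hs
    simp only [mem_Iic] at hs
    have h1 : 0 ≤ (t-s)^p - (-s)^p := F_nonneg hp0 ht.1 hs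
    have h2 : (t-s)^p - (-s)^p ≤ (1-s)^p - (-s)^p := F_le hp0 ht.2 hs ht.1
    have h3 : 0 ≤ (1-s)^p - (-s)^p := F_nonneg hp0 zero_le_one hs
    rw [Real.norm_eq_abs, abs_of_nonneg (mul_nonneg h1 h3), sq]
    exact mul_le_mul_of_nonneg_right h2 h3
  · exact G_integrable hp0 hp2
  · apply Filter.Eventually.of_forall
    intro s
    exact (((hcont.comp (continuous_sub_right s)).sub continuous_const).mul
      continuous_const).continuousOn

lemma J_eq {p : ℝ} (hp0 : 0 < p) {t : ℝ} (ht0 : 0 ≤ t) (ht1 : t ≤ 1) :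
    ∫ s in (0:ℝ)..t, (t-s)^p * (1-s)^p
      = ∫ s in (0:ℝ)..1, (max (t-s) 0)^p * (1-s)^p := by
  have hcont : Continuous (fun x : ℝ => x ^ p) := Real.continuous_rpow_const hp0.le
  have hmc : Continuous (fun s : ℝ => (max (t-s) 0)^p * (1-s)^p) :=
    (hcont.comp ((continuous_const.sub continuous_id).max continuous_const)).mul
      (hcont.comp (continuous_const.sub continuous_id))
  have h1 : ∫ s in (0:ℝ)..t, (max (t-s) 0)^p * (1-s)^p
      = ∫ s in (0:ℝ)..t, (t-s)^p * (1-s)^p := by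
    apply intervalIntegral.integral_congr
    intro s hs
    rw [uIcc_of_le ht0] at hs
    show ((t - s) ⊔ 0) ^ p * (1 - s) ^ p = (t - s) ^ p * (1 - s) ^ p
    rw [max_eq_left (by linarith [hs.2] : (0:ℝ) ≤ t - s)]
  have h2 : ∫ s in t..1, (max (t-s) 0)^p * (1-s)^p = 0 := by
    have h2' : ∫ s in t..1, (max (t-s) 0)^p * (1-s)^p = ∫ _ in t..1, (0:ℝ) := by
      apply intervalIntegral.integral_congr
      intro s hs
      rw [uIcc_of_le ht1] at hs
      show ((t - s) ⊔ 0) ^ p * (1 - s) ^ p = (0:ℝ)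
      rw [max_eq_right (by linarith [hs.1] : t - s ≤ 0), Real.zero_rpow hp0.ne', zero_mul]
    rw [h2', intervalIntegral.integral_zero]
  rw [← intervalIntegral.integral_add_adjacent_intervals
    (hmc.intervalIntegrable 0 t) (hmc.intervalIntegrable t 1), h1, h2, add_zero]

lemma J_cont {p : ℝ} (hp0 : 0 < p) :
    ContinuousOn (fun t : ℝ => ∫ s in (0:ℝ)..1, (max (t-s) 0)^p * (1-s)^p) (Icc 0 1) := by
  have hcont : Continuous (fun x : ℝ => x ^ p) := Real.continuous_rpow_const hp0.le
  simp only [intervalIntegral.integral_of_le (zero_le_one' ℝ)]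
  apply continuousOn_of_dominated (bound := fun _ : ℝ => (1:ℝ))
  · intro t ht
    exact ((hcont.comp ((continuous_const.sub continuous_id).max continuous_const)).mul
      (hcont.comp (continuous_const.sub continuous_id))).aestronglyMeasurable.restrict
  · intro t ht
    filter_upwards [ae_restrict_mem measurableSet_Ioc] with s hs
    have hm0 : 0 ≤ max (t-s) 0 := le_max_right _ _
    have hm1 : max (t-s) 0 ≤ 1 := by
      apply max_le _ zero_le_one; linarith [ht.2, hs.1]
    have h10 : (0:ℝ) ≤ 1 - s := by linarith [hs.2]
    have h11 : (1:ℝ) - s ≤ 1 := by linarith [hs.1]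
    rw [Real.norm_eq_abs, abs_of_nonneg (mul_nonneg (Real.rpow_nonneg hm0 p)
      (Real.rpow_nonneg h10 p))]
    calc (max (t-s) 0)^p * (1-s)^p ≤ 1^p * 1^p := by
          apply mul_le_mul (Real.rpow_le_rpow hm0 hm1 hp0.le)
            (Real.rpow_le_rpow h10 h11 hp0.le) (Real.rpow_nonneg h10 p)
            (Real.rpow_nonneg zero_le_one p)
    _ = 1 := by rw [Real.one_rpow, mul_one]
  · exact integrable_const _
  · apply Filter.Eventually.of_forall
    intro s
    exact ((hcont.comp ((continuous_id.sub continuous_const).max continuous_const)).mul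
      continuous_const).continuousOn

lemma J_mono {p : ℝ} (hp0 : 0 < p) {t₁ t₂ : ℝ} (h0 : 0 ≤ t₁) (hlt : t₁ < t₂) (h1 : t₂ ≤ 1) :
    ∫ s in (0:ℝ)..t₁, (t₁-s)^p * (1-s)^p < ∫ s in (0:ℝ)..t₂, (t₂-s)^p * (1-s)^p := by
  have hcont : Continuous (fun x : ℝ => x ^ p) := Real.continuous_rpow_const hp0.le
  have hc : ∀ t : ℝ, Continuous (fun s : ℝ => (t-s)^p * (1-s)^p) := fun t =>
    (hcont.comp (continuous_const.sub continuous_id)).mul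
      (hcont.comp (continuous_const.sub continuous_id))
  have step1 : ∫ s in (0:ℝ)..t₁, (t₁-s)^p * (1-s)^p
      ≤ ∫ s in (0:ℝ)..t₁, (t₂-s)^p * (1-s)^p := by
    apply intervalIntegral.integral_mono_on h0 ((hc t₁).intervalIntegrable 0 t₁)
      ((hc t₂).intervalIntegrable 0 t₁)
    intro s hs
    apply mul_le_mul_of_nonneg_right
      (Real.rpow_le_rpow (by linarith [hs.2]) (by linarith) hp0.le)
      (Real.rpow_nonneg (by linarith [hs.2, hlt, h1] : (0:ℝ) ≤ 1 - s) p)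
  have step2 : 0 < ∫ s in t₁..t₂, (t₂-s)^p * (1-s)^p := by
    apply intervalIntegral.intervalIntegral_pos_of_pos_on
      ((hc t₂).intervalIntegrable t₁ t₂) _ hlt
    intro s hs
    exact mul_pos (Real.rpow_pos_of_pos (by linarith [hs.2]) p)
      (Real.rpow_pos_of_pos (by linarith [hs.2] : (0:ℝ) < 1 - s) p)
  have step3 : ∫ s in (0:ℝ)..t₂, (t₂-s)^p * (1-s)^p
      = (∫ s in (0:ℝ)..t₁, (t₂-s)^p * (1-s)^p) + ∫ s in t₁..t₂, (t₂-s)^p * (1-s)^p :=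
    (intervalIntegral.integral_add_adjacent_intervals
      ((hc t₂).intervalIntegrable 0 t₁) ((hc t₂).intervalIntegrable t₁ t₂)).symm
  rw [step3]; linarith

theorem extremal_f_increasing (H : ℝ) (hH1 : 1 / 2 < H) (hH2 : H < 1) :
    let kH : ℝ := Real.sqrt
      ((∫ s in Iic (0 : ℝ), ((1 - s) ^ (H - 1 / 2) - (-s) ^ (H - 1 / 2)) ^ 2) +
        ∫ s in (0 : ℝ)..1, (1 - s) ^ (2 * H - 1))
    let g : ℝ → ℝ := fun s =>
      if s ≤ 0 then (1 / kH) * ((1 - s) ^ (H - 1 / 2) - (-s) ^ (H - 1 / 2))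
      else (1 / kH) * (1 - s) ^ (H - 1 / 2)
    let f : ℝ → ℝ := fun t =>
      (1 / kH) * (∫ s in Iic (0 : ℝ), ((t - s) ^ (H - 1 / 2) - (-s) ^ (H - 1 / 2)) * g s) +
        (1 / kH) * ∫ s in (0 : ℝ)..t, (t - s) ^ (H - 1 / 2) * g s
    ContinuousOn f (Icc 0 1) ∧ StrictMonoOn f (Icc 0 1) ∧ f 0 = 0 ∧ f 1 = 1 := by
  intro kH g f
  have hp0 : (0:ℝ) < H - 1/2 := by linarith
  have hp2 : H - 1/2 < 1/2 := by linarith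
  set A := ∫ s in Iic (0 : ℝ), ((1 - s) ^ (H - 1/2) - (-s) ^ (H - 1/2)) ^ 2 with hA_def
  set B := ∫ s in (0 : ℝ)..1, (1 - s) ^ (2 * H - 1) with hB_def
  have hA : 0 ≤ A := setIntegral_nonneg measurableSet_Iic fun s _ => sq_nonneg _
  have hB : 0 < B := by
    apply intervalIntegral.intervalIntegral_pos_of_pos_on
    · exact (((Real.continuous_rpow_const (by linarith : (0:ℝ) ≤ 2*H-1)).comp
        (continuous_const.sub continuous_id)).intervalIntegrable 0 1)
    · intro s hs
      exact Real.rpow_pos_of_pos (by linarith [hs.2] : (0:ℝ) < 1 - s) _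
    · exact one_pos
  have hkH : kH = Real.sqrt (A + B) := rfl
  have hkpos : 0 < kH := by rw [hkH]; exact Real.sqrt_pos.2 (by linarith)
  have hk2 : kH ^ 2 = A + B := by rw [hkH, sq]; exact Real.mul_self_sqrt (by linarith)
  set I : ℝ → ℝ := fun t => ∫ s in Iic (0:ℝ),
    ((t-s)^(H-1/2) - (-s)^(H-1/2)) * ((1-s)^(H-1/2) - (-s)^(H-1/2)) with hI_def
  set J : ℝ → ℝ := fun t => ∫ s in (0:ℝ)..t, (t-s)^(H-1/2) * (1-s)^(H-1/2) with hJ_def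
  have hf_eq : ∀ t, 0 ≤ t → f t = (1/kH^2) * (I t + J t) := by
    intro t ht
    have e1 : (∫ s in Iic (0:ℝ), ((t-s)^(H-1/2) - (-s)^(H-1/2)) * g s)
        = (1/kH) * I t := by
      rw [hI_def]
      rw [← integral_const_mul]
      apply setIntegral_congr_fun measurableSet_Iic
      intro s hs
      simp only [mem_Iic] at hs
      show ((t-s)^(H-1/2) - (-s)^(H-1/2)) * g s = _
      have : g s = (1/kH) * ((1-s)^(H-1/2) - (-s)^(H-1/2)) := if_pos hs
      rw [this]; ring
    have e2 : (∫ s in (0:ℝ)..t, (t-s)^(H-1/2) * g s) = (1/kH) * J t := by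
      rw [hJ_def]
      rw [← intervalIntegral.integral_const_mul]
      apply intervalIntegral.integral_congr
      intro s hs
      rw [uIcc_of_le ht] at hs
      show (t-s)^(H-1/2) * g s = (1/kH) * ((t-s)^(H-1/2) * (1-s)^(H-1/2))
      rcases le_or_gt s 0 with h | h
      · have hs0 : s = 0 := le_antisymm h hs.1
        subst hs0
        have : g 0 = (1/kH) * ((1-(0:ℝ))^(H-1/2) - (-(0:ℝ))^(H-1/2)) := if_pos le_rfl
        rw [this]
        rw [neg_zero, Real.zero_rpow (by linarith : H - 1/2 ≠ 0)]
        ring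
      · have : g s = (1/kH) * (1-s)^(H-1/2) := if_neg (not_le.2 h)
        rw [this]; ring
    show (1/kH) * (∫ s in Iic (0:ℝ), ((t-s)^(H-1/2) - (-s)^(H-1/2)) * g s)
        + (1/kH) * (∫ s in (0:ℝ)..t, (t-s)^(H-1/2) * g s) = (1/kH^2) * (I t + J t)
    rw [e1, e2]; ring
  refine ⟨?_, ?_, ?_, ?_⟩
  · -- continuity
    apply ContinuousOn.congr
      (s := Icc (0:ℝ) 1)
      (f := fun t => (1/kH^2) * (I t + ∫ s in (0:ℝ)..1, (max (t-s) 0)^(H-1/2) * (1-s)^(H-1/2)))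
    · exact continuousOn_const.mul ((I_cont hp0 hp2).add (J_cont hp0))
    · intro t ht
      rw [hf_eq t ht.1, hJ_def]
      simp only
      rw [J_eq hp0 ht.1 ht.2]
  · -- strict mono
    intro t1 ht1 t2 ht2 hlt
    rw [hf_eq t1 ht1.1, hf_eq t2 ht2.1]
    apply mul_lt_mul_of_pos_left _ (by positivity)
    have hImono : I t1 ≤ I t2 := by
      rw [hI_def]
      apply setIntegral_mono_on (F_integrable hp0 hp2 ht1.1 ht1.2)
        (F_integrable hp0 hp2 ht2.1 ht2.2) measurableSet_Iic
      intro s hs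
      simp only [mem_Iic] at hs
      exact mul_le_mul_of_nonneg_right (F_le hp0 hlt.le hs ht1.1)
        (F_nonneg hp0 zero_le_one hs)
    have hJlt : J t1 < J t2 := J_mono hp0 ht1.1 hlt ht2.2
    linarith
  · -- f 0 = 0
    rw [hf_eq 0 le_rfl]
    have hI0 : I 0 = 0 := by
      rw [hI_def]
      simp only [zero_sub, sub_self, zero_mul, integral_zero]
    have hJ0 : J 0 = 0 := intervalIntegral.integral_same
    rw [hI0, hJ0]; ring
  · -- f 1 = 1
    rw [hf_eq 1 zero_le_one]
    have hI1 : I 1 = A := by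
      rw [hI_def, hA_def]
      apply setIntegral_congr_fun measurableSet_Iic
      intro s _
      exact (sq _).symm
    have hJ1 : J 1 = B := by
      rw [hJ_def, hB_def]
      apply intervalIntegral.integral_congr
      intro s hs
      rw [uIcc_of_le zero_le_one] at hs
      show (1-s)^(H-1/2) * (1-s)^(H-1/2) = (1-s)^(2*H-1)
      rw [show (2*H-1) = (H-1/2)+(H-1/2) by ring,
        Real.rpow_add' (by linarith [hs.2] : (0:ℝ) ≤ 1-s)
          (by linarith : (H-1/2)+(H-1/2) ≠ 0)]
    rw [hI1, hJ1, ← hk2]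
    field_simp
end
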